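/- Let R := Polynomial ℝ (polynomial ring in one variable X over ℝ) and let S := {g : Fin 2 → R | g 0 − g 1 ∈ Ideal.span {X^2}}, an R-submodule of Fin 2 → R. Then the map S ⊗[R] (R ⧸ Ideal.span {X}) → (Fin 2 → R) ⊗[R] (R ⧸ Ideal.span {X}) induced by the inclusion S → (Fin 2 → R) is not injective. -/

import Mathlib

open Polynomial

/-- For `R = ℝ[X]` and
`S = {g : Fin 2 → R | g 0 − g 1 ∈ (X²)} ⊆ Fin 2 → R`, the map
`S ⊗[R] (R ⧸ (X)) → (Fin 2 → R) ⊗[R] (R ⧸ (X))` induced by the inclusion is not injective. -/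
theorem stmt_4 (S : Submodule (Polynomial ℝ) (Fin 2 → Polynomial ℝ))
    (hS : ∀ g : Fin 2 → Polynomial ℝ,
      g ∈ S ↔ g 0 - g 1 ∈ Ideal.span {(X : Polynomial ℝ) ^ 2}) :
    ¬ Function.Injective
        (LinearMap.rTensor (Polynomial ℝ ⧸ Ideal.span {(X : Polynomial ℝ)}) S.subtype) := by
  intro hinj
  set R := Polynomial ℝ
  set Q := R ⧸ Ideal.span {(X : R)}
  have hmonic : ((X : R) ^ 2).Monic := monic_X.pow 2
  have hX2 : ((X : R) ^ 2) ≠ 0 := hmonic.ne_zero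
  -- key division property
  have key : ∀ s : S, (X : R) ^ 2 * ((s.1 0 - s.1 1) /ₘ (X ^ 2)) = s.1 0 - s.1 1 := by
    intro s
    have hd : (X : R) ^ 2 ∣ (s.1 0 - s.1 1) :=
      Ideal.mem_span_singleton.mp ((hS _).mp s.2)
    have hm := Polynomial.modByMonic_add_div (s.1 0 - s.1 1) ((X : R) ^ 2)
    rw [(Polynomial.modByMonic_eq_zero_iff_dvd hmonic).mpr hd, zero_add] at hm
    exact hm
  -- the linear functional dividing by X^2
  let lam : S →ₗ[R] R :=
    { toFun := fun s => (s.1 0 - s.1 1) /ₘ (X ^ 2)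
      map_add' := by
        intro a b
        apply mul_left_cancel₀ hX2
        show (X : R) ^ 2 * ((((a + b : S) : Fin 2 → R) 0 - ((a + b : S) : Fin 2 → R) 1) /ₘ X ^ 2) = _
        rw [key (a + b)]
        simp only [Submodule.coe_add, Pi.add_apply, mul_add, key a, key b]
        ring
      map_smul' := by
        intro c a
        apply mul_left_cancel₀ hX2
        show (X : R) ^ 2 * ((((c • a : S) : Fin 2 → R) 0 - ((c • a : S) : Fin 2 → R) 1) /ₘ X ^ 2) = _
        rw [key (c • a)]
        simp only [Submodule.coe_smul, Pi.smul_apply, smul_eq_mul, RingHom.id_apply]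
        rw [mul_left_comm, key a]
        ring }
  let chi : TensorProduct R S Q →ₗ[R] Q :=
    (TensorProduct.lid R Q).toLinearMap ∘ₗ LinearMap.rTensor Q lam
  -- the witness element
  let g : Fin 2 → R := ![-X ^ 2, X ^ 2]
  have hg : g ∈ S := by
    rw [hS]
    refine Ideal.mem_span_singleton.mpr ⟨-2, ?_⟩
    show (![-X ^ 2, X ^ 2] : Fin 2 → R) 0 - _ = _
    simp [g]
    ring
  let t : TensorProduct R S Q := (⟨g, hg⟩ : S) ⊗ₜ[R] (1 : Q)
  -- its image in the ambient tensor is zero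
  have hmapzero : LinearMap.rTensor Q S.subtype t = 0 := by
    have hgsm : g = (X : R) ^ 2 • ![-1, 1] := by
      funext i
      fin_cases i <;> simp [g]
    have hQ0 : ((X : R) ^ 2) • (1 : Q) = 0 := by
      rw [← Algebra.algebraMap_eq_smul_one, Ideal.Quotient.algebraMap_eq,
        Ideal.Quotient.eq_zero_iff_mem]
      exact Ideal.mem_span_singleton.mpr (dvd_pow_self X two_ne_zero)
    calc LinearMap.rTensor Q S.subtype t = g ⊗ₜ[R] (1 : Q) := rfl
      _ = (((X : R) ^ 2) • (![-1, 1] : Fin 2 → R)) ⊗ₜ[R] (1 : Q) := by rw [← hgsm]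
      _ = (![-1, 1] : Fin 2 → R) ⊗ₜ[R] (((X : R) ^ 2) • (1 : Q)) := by
          rw [TensorProduct.smul_tmul]
      _ = 0 := by rw [hQ0, TensorProduct.tmul_zero]
  -- hence t = 0 by injectivity
  have ht0 : t = 0 := hinj (by rw [hmapzero, map_zero])
  -- but chi t ≠ 0
  have hlam : lam ⟨g, hg⟩ = -2 := by
    apply mul_left_cancel₀ hX2
    show (X : R) ^ 2 * ((((⟨g, hg⟩ : S) : Fin 2 → R) 0 - ((⟨g, hg⟩ : S) : Fin 2 → R) 1) /ₘ X ^ 2) = _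
    rw [key ⟨g, hg⟩]
    show (![-X ^ 2, X ^ 2] : Fin 2 → R) 0 - (![-X ^ 2, X ^ 2] : Fin 2 → R) 1 = _
    simp
    ring
  have hchit : chi t = Ideal.Quotient.mk (Ideal.span {(X : R)}) (-2) := by
    show (TensorProduct.lid R Q) ((lam ⟨g, hg⟩) ⊗ₜ[R] (1 : Q)) = _
    rw [hlam, TensorProduct.lid_tmul, ← Algebra.algebraMap_eq_smul_one,
      Ideal.Quotient.algebraMap_eq]
  have : (Ideal.Quotient.mk (Ideal.span {(X : R)}) (-2) : Q) = 0 := by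
    rw [← hchit, ht0, map_zero]
  rw [Ideal.Quotient.eq_zero_iff_mem, Ideal.mem_span_singleton, X_dvd_iff] at this
  simp at this
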